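/- For λ near 1, ω(λ) = i√2 sin(α/2) (λ−1)^{1/2} G(λ), where G is analytic in a neighborhood of λ = 1 and G(λ) = 1 + (λ−1)(1/4 − (2/3) sin²(α/2)) + O((λ−1)²). -/

import Mathlib

open Complex

/-- The function `ω(λ) = (1/2) ln((1 + i(λ²−1)^{1/2} sin(α/2))/(1 − i(λ²−1)^{1/2} sin(α/2)))`,
with principal branches (so `(λ²−1)^{1/2} > 0` for real `λ > 1`, and the cut
of `(λ²−1)^{1/2}` lies on `[−1,1]`). -/
noncomputable def omegaFn (α z : ℂ) : ℂ :=
  (1 / 2) * Complex.log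
    ((1 + Complex.I * (z ^ 2 - 1) ^ ((1 : ℂ) / 2) * Complex.sin (α / 2))
      / (1 - Complex.I * (z ^ 2 - 1) ^ ((1 : ℂ) / 2) * Complex.sin (α / 2)))

/- ### Auxiliary power series `A(t) = ∑ (-1)^n t^n / (2n+1)`, so that `arctan v = v * A (v²)` -/

noncomputable def atanCoeff : ℕ → ℂ := fun n => (-1) ^ n / (2 * n + 1)

noncomputable def atanSeries : FormalMultilinearSeries ℂ ℂ ℂ :=
  FormalMultilinearSeries.ofScalars ℂ atanCoeff

lemma atanCoeff_norm_le (n : ℕ) : ‖atanCoeff n‖ ≤ 1 := by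
  have h : atanCoeff n = (-1) ^ n / ((2 * n + 1 : ℕ) : ℂ) := by
    rw [atanCoeff]; push_cast; ring
  have hn : (1 : ℝ) ≤ ((2 * n + 1 : ℕ) : ℝ) := by exact_mod_cast Nat.succ_le_succ (Nat.zero_le _)
  rw [h, norm_div, norm_pow, norm_neg, norm_one, one_pow,
    show ‖((2 * n + 1 : ℕ) : ℂ)‖ = ((2 * n + 1 : ℕ) : ℝ) from by
      rw [Complex.norm_natCast]]
  rw [div_le_one (by linarith)]
  linarith

lemma atanSeries_radius : 1 ≤ atanSeries.radius := by
  have := atanSeries.le_radius_of_bound 1 (r := 1) (fun n => by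
    have h : ‖atanSeries n‖ = ‖atanCoeff n‖ :=
      FormalMultilinearSeries.ofScalars_norm ℂ atanCoeff n
    rw [h]
    simpa using atanCoeff_norm_le n)
  simpa using this

noncomputable def myA : ℂ → ℂ := atanSeries.sum

lemma myA_hasFPowerSeriesAt : HasFPowerSeriesAt myA atanSeries 0 :=
  (atanSeries.hasFPowerSeriesOnBall
    (lt_of_lt_of_le zero_lt_one atanSeries_radius)).hasFPowerSeriesAt

lemma myA_analyticAt : AnalyticAt ℂ myA 0 := myA_hasFPowerSeriesAt.analyticAt

lemma atanSeries_apply (n : ℕ) (x : ℂ) :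
    (atanSeries n fun _ => x) = atanCoeff n * x ^ n := by
  show (FormalMultilinearSeries.ofScalars ℂ atanCoeff n fun _ => x) = _
  rw [FormalMultilinearSeries.ofScalars_apply_eq, smul_eq_mul]

lemma myA_hasSum {t : ℂ} (ht : ‖t‖ < 1) :
    HasSum (fun n => atanCoeff n * t ^ n) (myA t) := by
  have hm : t ∈ Metric.eball (0 : ℂ) atanSeries.radius := by
    rw [Metric.mem_eball, edist_zero_right, enorm_eq_nnnorm]
    refine lt_of_lt_of_le ?_ atanSeries_radius
    exact_mod_cast ht
  have := atanSeries.hasSum hm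
  simp only [atanSeries_apply] at this
  exact this

lemma myA_zero : myA 0 = 1 := by
  have := (myA_hasSum (t := 0) (by norm_num)).tsum_eq
  rw [← this, tsum_eq_single 0 (by intro n hn; simp [hn])]
  simp [atanCoeff]

lemma myA_hasDerivAt : HasDerivAt myA (-1 / 3) 0 := by
  have h := myA_hasFPowerSeriesAt.hasDerivAt
  rw [atanSeries_apply 1 1] at h
  norm_num [atanCoeff] at h
  rw [show (-1 / 3 : ℂ) = -(1 / 3) by ring]
  exact h

lemma arctan_eq_mul {v : ℂ} (hv : ‖v‖ < 1) : Complex.arctan v = v * myA (v ^ 2) := by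
  have h2 : ‖v ^ 2‖ < 1 := by
    rw [norm_pow]
    exact pow_lt_one₀ (norm_nonneg v) hv two_ne_zero
  have hs := (myA_hasSum h2).mul_left v
  refine (Complex.hasSum_arctan hv).unique ?_
  have he : (fun n : ℕ => (-1) ^ n * v ^ (2 * n + 1) / ((2 * n + 1 : ℕ) : ℂ))
      = fun n : ℕ => v * (atanCoeff n * (v ^ 2) ^ n) := by
    funext n
    rw [atanCoeff, ← pow_mul]
    push_cast
    ring
  rw [he]
  exact hs

/- ### Branch computations -/

lemma arg_sum_mem {z : ℂ} (hz : ‖z - 1‖ < 1) (hoff : ¬(z.im = 0 ∧ z.re ≤ 1)) :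
    -Real.pi < (z - 1).arg + (z + 1).arg ∧ (z - 1).arg + (z + 1).arg ≤ Real.pi := by
  have hre : |z.re - 1| < 1 := lt_of_le_of_lt (by simpa using Complex.abs_re_le_norm (z - 1)) hz
  have hre1 : 0 < z.re := by cases' abs_lt.mp hre with h1 h2; linarith
  have hb_re : 1 < (z + 1).re := by simp [Complex.add_re]; linarith
  have hb_ne : z + 1 ≠ 0 := fun h => by simp [h] at hb_re; linarith
  have hb_arg : |(z + 1).arg| < Real.pi / 2 :=
    Complex.abs_arg_lt_pi_div_two_iff.mpr (Or.inl (by linarith))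
  have hb_abs : 1 < ‖z + 1‖ := lt_of_lt_of_le hb_re (Complex.re_le_norm (z + 1))
  have ha_abs : ‖z - 1‖ < 1 := by simpa using hz
  have hab : ‖z - 1‖ < ‖z + 1‖ := lt_trans ha_abs hb_abs
  have ha_im : (z - 1).im = z.im := by simp
  have hb_im : (z + 1).im = z.im := by simp
  rcases lt_trichotomy z.im 0 with him | him | him
  · -- im z < 0
    have ha_neg : (z - 1).arg < 0 := Complex.arg_neg_iff.mpr (by rwa [ha_im])
    have hb_neg : (z + 1).arg < 0 := Complex.arg_neg_iff.mpr (by rwa [hb_im])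
    have ha_gt : -Real.pi < (z - 1).arg := Complex.neg_pi_lt_arg _
    refine ⟨?_, by linarith [Real.pi_pos]⟩
    by_cases hc : -(Real.pi / 2) ≤ (z - 1).arg
    · have := (abs_lt.mp hb_arg).1
      linarith
    push_neg at hc
    set θ := Real.pi + (z - 1).arg with hθ
    have hθ1 : 0 < θ := by simp only [hθ]; linarith
    have hθ2 : θ < Real.pi / 2 := by simp only [hθ]; linarith
    have ha0 : 0 < ‖z - 1‖ := by
      refine norm_pos_iff.mpr (fun h => ?_)
      rw [h] at ha_im
      simp at ha_im
      exact absurd ha_im.symm (ne_of_lt him)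
    have hsin : Real.sin (-(z + 1).arg) < Real.sin θ := by
      have h1 : Real.sin θ = -z.im / ‖z - 1‖ := by
        rw [hθ, add_comm, Real.sin_add_pi, Complex.sin_arg, ha_im, neg_div]
      have h2 : Real.sin (-(z + 1).arg) = -z.im / ‖z + 1‖ := by
        rw [Real.sin_neg, Complex.sin_arg, hb_im, neg_div]
      rw [h1, h2]
      exact div_lt_div_of_pos_left (by linarith) ha0 hab
    have hlt : -(z + 1).arg < θ := by
      by_contra hle
      push_neg at hle
      have := Real.strictMonoOn_sin.monotoneOn
        ⟨by linarith, by linarith⟩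
        ⟨by linarith [(abs_lt.mp hb_arg).2], by linarith [(abs_lt.mp hb_arg).1]⟩ hle
      linarith
    simp only [hθ] at hlt
    linarith
  · -- im z = 0, so re z > 1
    have hre2 : 1 < z.re := by
      by_contra h
      push_neg at h
      exact hoff ⟨him, h⟩
    have ha : (z - 1).arg = 0 :=
      Complex.arg_eq_zero_iff.mpr ⟨by simp; linarith, by simp [him]⟩
    have hb : (z + 1).arg = 0 :=
      Complex.arg_eq_zero_iff.mpr ⟨by simp; linarith, by simp [him]⟩
    rw [ha, hb]
    constructor <;> [linarith [Real.pi_pos]; linarith [Real.pi_pos]]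
  · -- im z > 0
    have ha_ne : z - 1 ≠ 0 := by
      intro h
      have : (z - 1).im = 0 := by rw [h]; simp
      rw [ha_im] at this
      exact absurd this (ne_of_gt him)
    have ha_pos : 0 < (z - 1).arg := by
      rcases lt_or_eq_of_le (Complex.arg_nonneg_iff.mpr (by rw [ha_im]; linarith)) with h | h
      · exact h
      · exact absurd (Complex.arg_eq_zero_iff.mp h.symm).2 (by rw [ha_im]; exact ne_of_gt him)
    have hb_pos : 0 < (z + 1).arg := by
      rcases lt_or_eq_of_le (Complex.arg_nonneg_iff.mpr (by rw [hb_im]; linarith)) with h | h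
      · exact h
      · exact absurd (Complex.arg_eq_zero_iff.mp h.symm).2 (by rw [hb_im]; exact ne_of_gt him)
    have ha_lt : (z - 1).arg < Real.pi := by
      rcases lt_or_eq_of_le (Complex.arg_le_pi (z - 1)) with h | h
      · exact h
      · exact absurd (Complex.arg_eq_pi_iff.mp h).2 (by rw [ha_im]; exact ne_of_gt him)
    constructor
    · linarith [Real.pi_pos]
    by_cases hc : (z - 1).arg ≤ Real.pi / 2
    · have := (abs_lt.mp hb_arg).2
      linarith
    push_neg at hc
    set θ := Real.pi - (z - 1).arg with hθ
    have hθ1 : 0 < θ := by simp only [hθ]; linarith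
    have hθ2 : θ < Real.pi / 2 := by simp only [hθ]; linarith
    have ha0 : 0 < ‖z - 1‖ := norm_pos_iff.mpr ha_ne
    have hsin : Real.sin ((z + 1).arg) < Real.sin θ := by
      have h1 : Real.sin θ = z.im / ‖z - 1‖ := by
        rw [hθ, Real.sin_pi_sub, Complex.sin_arg, ha_im]
      have h2 : Real.sin ((z + 1).arg) = z.im / ‖z + 1‖ := by
        rw [Complex.sin_arg, hb_im]
      rw [h1, h2]
      exact div_lt_div_of_pos_left him ha0 hab
    have hlt : (z + 1).arg < θ := by
      by_contra hle
      push_neg at hle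
      have := Real.strictMonoOn_sin.monotoneOn
        ⟨by linarith, by linarith⟩
        ⟨by linarith [(abs_lt.mp hb_arg).1], by linarith [(abs_lt.mp hb_arg).2]⟩ hle
      linarith
    simp only [hθ] at hlt
    linarith

lemma sqrt_split {z : ℂ} (hz : ‖z - 1‖ < 1) (hoff : ¬(z.im = 0 ∧ z.re ≤ 1)) :
    (z ^ 2 - 1) ^ ((1 : ℂ) / 2) = (z - 1) ^ ((1 : ℂ) / 2) * (z + 1) ^ ((1 : ℂ) / 2) := by
  have ha_ne : z - 1 ≠ 0 := by
    intro h
    have hz1 : z = 1 := by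
      have := sub_eq_zero.mp h
      simpa using this
    exact hoff ⟨by simp [hz1], by simp [hz1]⟩
  have hre : |z.re - 1| < 1 := lt_of_le_of_lt (by simpa using Complex.abs_re_le_norm (z - 1)) hz
  have hb_ne : z + 1 ≠ 0 := by
    intro h
    have : (z + 1).re = 0 := by rw [h]; simp
    simp [Complex.add_re] at this
    cases' abs_lt.mp hre with h1 h2
    linarith
  have hlog : Complex.log ((z - 1) * (z + 1)) = Complex.log (z - 1) + Complex.log (z + 1) :=
    Complex.log_mul ha_ne hb_ne (arg_sum_mem hz hoff)
  rw [show z ^ 2 - 1 = (z - 1) * (z + 1) by ring,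
    Complex.cpow_def_of_ne_zero (mul_ne_zero ha_ne hb_ne),
    Complex.cpow_def_of_ne_zero ha_ne, Complex.cpow_def_of_ne_zero hb_ne,
    ← Complex.exp_add, hlog, add_mul]

lemma norm_cpow_half (x : ℂ) : ‖x ^ ((1 : ℂ) / 2)‖ = Real.sqrt ‖x‖ := by
  rw [show ((1 : ℂ) / 2) = (((1 / 2 : ℝ) : ℂ)) by norm_num,
    Complex.norm_cpow_real, Real.sqrt_eq_rpow]

lemma omega_eq_arctan (α z : ℂ) :
    omegaFn α z
      = Complex.I * Complex.arctan ((z ^ 2 - 1) ^ ((1 : ℂ) / 2) * Complex.sin (α / 2)) := by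
  have harg : (1 + Complex.I * (z ^ 2 - 1) ^ ((1 : ℂ) / 2) * Complex.sin (α / 2))
      / (1 - Complex.I * (z ^ 2 - 1) ^ ((1 : ℂ) / 2) * Complex.sin (α / 2))
      = (1 + ((z ^ 2 - 1) ^ ((1 : ℂ) / 2) * Complex.sin (α / 2)) * Complex.I)
      / (1 - ((z ^ 2 - 1) ^ ((1 : ℂ) / 2) * Complex.sin (α / 2)) * Complex.I) := by
    ring_nf
  rw [omegaFn, harg, Complex.arctan]
  linear_combination ((1 : ℂ) / 2
    * Complex.log ((1 + (z ^ 2 - 1) ^ ((1 : ℂ) / 2) * Complex.sin (α / 2) * Complex.I)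
      / (1 - (z ^ 2 - 1) ^ ((1 : ℂ) / 2) * Complex.sin (α / 2) * Complex.I))) * Complex.I_mul_I

lemma sqrt2C_ne : ((Real.sqrt 2 : ℝ) : ℂ) ≠ 0 := by
  have : Real.sqrt 2 ≠ 0 := by positivity
  exact_mod_cast this

lemma cpow2half : (2 : ℂ) ^ ((1 : ℂ) / 2) = ((Real.sqrt 2 : ℝ) : ℂ) := by
  rw [show ((1 : ℂ) / 2) = (((1 / 2 : ℝ) : ℂ)) by norm_num,
    show (2 : ℂ) = ((2 : ℝ) : ℂ) by norm_num,
    ← Complex.ofReal_cpow (by norm_num : (0 : ℝ) ≤ 2)]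
  norm_cast
  rw [Real.sqrt_eq_rpow]

noncomputable def Gfun (α : ℂ) : ℂ → ℂ := fun z =>
  (z + 1) ^ ((1 : ℂ) / 2) / ((Real.sqrt 2 : ℝ) : ℂ)
    * myA ((Complex.sin (α / 2)) ^ 2 * (z ^ 2 - 1))

/-- For `λ` near `1` (off the cut `(1−δ,1]`),
`ω(λ) = i√2 sin(α/2) (λ−1)^{1/2} G(λ)` where `G` is analytic in a
neighborhood of `λ = 1` with
`G(λ) = 1 + (λ−1)(1/4 − (2/3) sin²(α/2)) + O((λ−1)²)`. -/
theorem omega_factorization (α : ℂ) :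
    ∃ δ > (0 : ℝ), ∃ G : ℂ → ℂ,
      AnalyticAt ℂ G 1 ∧ G 1 = 1 ∧
      deriv G 1 = 1 / 4 - (2 / 3) * Complex.sin (α / 2) ^ 2 ∧
      ∀ z ∈ Metric.ball (1 : ℂ) δ,
        z ∉ {x : ℂ | x.im = 0 ∧ x.re ≤ 1} →
        omegaFn α z = Complex.I * (Real.sqrt 2 : ℝ) * Complex.sin (α / 2)
            * (z - 1) ^ ((1 : ℂ) / 2) * G z := by
  set s : ℂ := Complex.sin (α / 2) with hs
  refine ⟨min 1 (1 / (3 * (1 + ‖s‖ ^ 2))), lt_min one_pos (by positivity), Gfun α, ?_, ?_, ?_, ?_⟩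
  · -- analyticity
    apply AnalyticAt.mul
    · apply AnalyticAt.div
      · exact (analyticAt_id.add analyticAt_const).cpow analyticAt_const
          (by norm_num [Complex.mem_slitPlane_iff])
      · exact analyticAt_const
      · exact sqrt2C_ne
    · have hinner : AnalyticAt ℂ (fun z : ℂ => s ^ 2 * (z ^ 2 - 1)) 1 :=
        analyticAt_const.mul ((analyticAt_id.pow 2).sub analyticAt_const)
      exact AnalyticAt.comp (g := myA) (f := fun z : ℂ => s ^ 2 * (z ^ 2 - 1)) (x := 1)
        (by simpa using myA_analyticAt) hinner
  · -- value at 1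
    show ((1 : ℂ) + 1) ^ ((1 : ℂ) / 2) / ((Real.sqrt 2 : ℝ) : ℂ)
        * myA (s ^ 2 * ((1 : ℂ) ^ 2 - 1)) = 1
    rw [show ((1 : ℂ) + 1) = 2 by norm_num, cpow2half,
      show s ^ 2 * ((1 : ℂ) ^ 2 - 1) = 0 by ring, myA_zero]
    field_simp
  · -- derivative at 1
    have hf : HasDerivAt (fun z : ℂ => (z + 1) ^ ((1 : ℂ) / 2))
        (((1 : ℂ) / 2) * ((1 : ℂ) + 1) ^ ((1 : ℂ) / 2 - 1) * 1) 1 := by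
      exact HasDerivAt.cpow_const ((hasDerivAt_id (1 : ℂ)).add_const 1)
        (by norm_num [Complex.mem_slitPlane_iff])
    have hu : HasDerivAt (fun z : ℂ => s ^ 2 * (z ^ 2 - 1)) (s ^ 2 * 2) 1 := by
      have h := ((hasDerivAt_pow 2 (1 : ℂ)).sub_const 1).const_mul (s ^ 2)
      norm_num at h
      convert h using 1
    have hA1 : HasDerivAt myA (-1 / 3) ((fun z : ℂ => s ^ 2 * (z ^ 2 - 1)) 1) := by
      simpa using myA_hasDerivAt
    have hk : HasDerivAt (fun z : ℂ => myA (s ^ 2 * (z ^ 2 - 1))) (-1 / 3 * (s ^ 2 * 2)) 1 :=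
      hA1.comp 1 hu
    have hG : HasDerivAt (Gfun α)
        ((((1 : ℂ) / 2) * ((1 : ℂ) + 1) ^ ((1 : ℂ) / 2 - 1) * 1 / ((Real.sqrt 2 : ℝ) : ℂ))
            * myA (s ^ 2 * ((1 : ℂ) ^ 2 - 1))
          + (((1 : ℂ) + 1) ^ ((1 : ℂ) / 2) / ((Real.sqrt 2 : ℝ) : ℂ))
            * (-1 / 3 * (s ^ 2 * 2))) 1 := (hf.div_const _).mul hk
    rw [hG.deriv]
    have h2 : (((Real.sqrt 2 : ℝ) : ℂ)) * (((Real.sqrt 2 : ℝ) : ℂ)) = 2 := by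
      rw [← Complex.ofReal_mul, Real.mul_self_sqrt (by norm_num)]
      norm_num
    rw [show s ^ 2 * ((1 : ℂ) ^ 2 - 1) = 0 by ring, myA_zero,
      show ((1 : ℂ) + 1) = 2 by norm_num,
      show ((1 : ℂ) / 2 - 1) = -((1 : ℂ) / 2) by norm_num,
      Complex.cpow_neg, cpow2half]
    field_simp [sqrt2C_ne]
    linear_combination (-6 : ℂ) * h2
  · -- the factorization identity
    intro z hzball hzcut
    have hzd : ‖z - 1‖ < min 1 (1 / (3 * (1 + ‖s‖ ^ 2))) := by
      rw [Metric.mem_ball, Complex.dist_eq] at hzball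
      simpa using hzball
    have hz1 : ‖z - 1‖ < 1 := lt_of_lt_of_le hzd (min_le_left _ _)
    have hz2 : ‖z - 1‖ < 1 / (3 * (1 + ‖s‖ ^ 2)) := lt_of_lt_of_le hzd (min_le_right _ _)
    have hoff : ¬(z.im = 0 ∧ z.re ≤ 1) := hzcut
    have hzp : ‖z + 1‖ < 3 := by
      calc ‖z + 1‖ = ‖(z - 1) + 2‖ := by ring_nf
        _ ≤ ‖z - 1‖ + ‖(2 : ℂ)‖ := norm_add_le _ _
        _ < 3 := by rw [show ‖(2 : ℂ)‖ = 2 by norm_num]; linarith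
    have hprod : ‖z ^ 2 - 1‖ < 1 / (1 + ‖s‖ ^ 2) := by
      have : ‖z ^ 2 - 1‖ = ‖z - 1‖ * ‖z + 1‖ := by
        rw [← norm_mul]; congr 1; ring
      rw [this]
      have hpos : (0 : ℝ) < 1 + ‖s‖ ^ 2 := by positivity
      calc ‖z - 1‖ * ‖z + 1‖ ≤ ‖z - 1‖ * 3 :=
            mul_le_mul_of_nonneg_left hzp.le (norm_nonneg _)
        _ < (1 / (3 * (1 + ‖s‖ ^ 2))) * 3 :=
            mul_lt_mul_of_pos_right hz2 (by norm_num)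
        _ = 1 / (1 + ‖s‖ ^ 2) := by field_simp
    have hv : ‖(z ^ 2 - 1) ^ ((1 : ℂ) / 2) * s‖ < 1 := by
      rw [norm_mul, norm_cpow_half]
      have hX : ‖z ^ 2 - 1‖ * ‖s‖ ^ 2 < 1 := by
        have hpos : (0 : ℝ) < 1 + ‖s‖ ^ 2 := by positivity
        have h1 : ‖z ^ 2 - 1‖ * ‖s‖ ^ 2 ≤ (1 / (1 + ‖s‖ ^ 2)) * ‖s‖ ^ 2 :=
          mul_le_mul_of_nonneg_right hprod.le (sq_nonneg _)
        have h2 : (1 / (1 + ‖s‖ ^ 2)) * ‖s‖ ^ 2 < 1 := by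
          rw [div_mul_eq_mul_div, one_mul, div_lt_one hpos]; linarith
        linarith
      have hsq := Real.sq_sqrt (norm_nonneg (z ^ 2 - 1))
      have hnn := Real.sqrt_nonneg ‖z ^ 2 - 1‖
      nlinarith [norm_nonneg s, mul_nonneg hnn (norm_nonneg s)]
    rw [omega_eq_arctan, ← hs, arctan_eq_mul hv]
    have hsq : ((z ^ 2 - 1) ^ ((1 : ℂ) / 2) * s) ^ 2 = s ^ 2 * (z ^ 2 - 1) := by
      have h := Complex.cpow_nat_inv_pow (z ^ 2 - 1) (two_ne_zero)
      rw [mul_pow, show ((1 : ℂ) / 2) = (((2 : ℕ) : ℂ))⁻¹ by norm_num, h]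
      ring
    rw [hsq, sqrt_split hz1 hoff]
    show _ = _ * ((z + 1) ^ ((1 : ℂ) / 2) / ((Real.sqrt 2 : ℝ) : ℂ)
      * myA (s ^ 2 * (z ^ 2 - 1)))
    field_simp
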